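/- Let X, Y be Banach spaces, j : Y → X an isomorphism onto its image, ω a symplectic form on Y, and Ω a continuous bilinear form on X with Ω(jx, jy) = ω(x,y) for all x, y ∈ Y. Then j(Y) is a complemented subspace of X; indeed j ∘ L_ω⁻¹ ∘ j* ∘ L_Ω is a bounded projection of X onto j(Y). -/

import Mathlib

/-- If a symplectic form ω on Y extends to a continuous bilinear form Ω
on X through an into-isomorphism j : Y → X, then j(Y) is complemented in X. -/
theorem stmt17 {X Y : Type*} [NormedAddCommGroup X] [NormedSpace ℝ X] [CompleteSpace X]
    [NormedAddCommGroup Y] [NormedSpace ℝ Y] [CompleteSpace Y]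
    (j : Y →L[ℝ] X) (hj : ∃ c > 0, ∀ y, c * ‖y‖ ≤ ‖j y‖)
    (ω : Y →L[ℝ] Y →L[ℝ] ℝ) (halt : ∀ a b, ω a b = -ω b a)
    (hbij : Function.Bijective ω)
    (Ω : X →L[ℝ] X →L[ℝ] ℝ) (hext : ∀ a b : Y, Ω (j a) (j b) = ω a b) :
    ∃ P : X →L[ℝ] X, P.comp P = P ∧ LinearMap.range (P : X →ₗ[ℝ] X) = LinearMap.range (j : Y →ₗ[ℝ] X) := by
  have hker : LinearMap.ker (ω : Y →ₗ[ℝ] (Y →L[ℝ] ℝ)) = ⊥ := LinearMap.ker_eq_bot.2 hbij.1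
  have hrange : LinearMap.range (ω : Y →ₗ[ℝ] (Y →L[ℝ] ℝ)) = ⊤ := LinearMap.range_eq_top.2 hbij.2
  let e : Y ≃L[ℝ] (Y →L[ℝ] ℝ) := ContinuousLinearEquiv.ofBijective ω hker hrange
  let A : X →L[ℝ] (Y →L[ℝ] ℝ) :=
    ((ContinuousLinearMap.compL ℝ Y X ℝ).flip j).comp Ω
  let P : X →L[ℝ] X := j.comp ((e.symm : (Y →L[ℝ] ℝ) →L[ℝ] Y).comp A)
  have hA : ∀ y, A (j y) = ω y := by
    intro y; ext z; simp [A, hext]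
  have hPj : ∀ y, P (j y) = j y := by
    intro y
    have : e.symm (ω y) = y := e.symm_apply_apply y
    simp [P, hA, this]
  have hrangeP : LinearMap.range (P : X →ₗ[ℝ] X) = LinearMap.range (j : Y →ₗ[ℝ] X) := by
    apply le_antisymm
    · rintro x ⟨z, rfl⟩
      exact ⟨_, rfl⟩
    · rintro x ⟨y, rfl⟩
      exact ⟨j y, hPj y⟩
  refine ⟨P, ?_, hrangeP⟩
  ext x
  simp only [ContinuousLinearMap.comp_apply]
  exact hPj _
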